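/- For every θ ∈ (0, π) and every real s, the infimum of ∫_{-θ}^{θ} ((u')² - u²) over all u ∈ W₀^{1,2}(-θ, θ) with ∫_{-θ}^{θ} u = s equals s²·cos θ / (2(sin θ - θ·cos θ)). -/

import Mathlib

open Real MeasureTheory Set intervalIntegral

/-- Product rule for primitives of integrable functions (proved via Fubini). -/
lemma lemB {f g : ℝ → ℝ} {a b : ℝ} (hab : a ≤ b)
    (hf : IntervalIntegrable f volume a b) (hg : IntervalIntegrable g volume a b) :
    (∫ t in a..b, f t) * (∫ t in a..b, g t)
      = ∫ t in a..b, ((∫ s in a..t, f s) * g t + f t * (∫ s in a..t, g s)) := by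
  have hf1 : IntegrableOn f (Ioc a b) volume :=
    (intervalIntegrable_iff_integrableOn_Ioc_of_le hab).mp hf
  have hg1 : IntegrableOn g (Ioc a b) volume :=
    (intervalIntegrable_iff_integrableOn_Ioc_of_le hab).mp hg
  set μ : Measure ℝ := volume.restrict (Ioc a b) with hμ
  -- continuity of primitives
  have hHf : ContinuousOn (fun t => ∫ s in a..t, f s) (Icc a b) := by
    simpa [uIcc_of_le hab] using continuousOn_primitive_interval' hf
      (by simp [uIcc_of_le hab, hab])
  have hHg : ContinuousOn (fun t => ∫ s in a..t, g s) (Icc a b) := by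
    simpa [uIcc_of_le hab] using continuousOn_primitive_interval' hg
      (by simp [uIcc_of_le hab, hab])
  -- integrability of Hf * g and f * Hg on the interval
  have hHfg : IntervalIntegrable (fun t => (∫ s in a..t, f s) * g t) volume a b :=
    hg.continuousOn_mul (by rwa [uIcc_of_le hab])
  have hfHg : IntervalIntegrable (fun t => f t * (∫ s in a..t, g s)) volume a b :=
    hf.mul_continuousOn (by rwa [uIcc_of_le hab])
  -- the indicator kernel
  set F : ℝ → ℝ → ℝ := fun t s => (Ioi t).indicator f s * g t with hF
  have hFint : Integrable (Function.uncurry F) (μ.prod μ) := by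
    have : Function.uncurry F = {p : ℝ × ℝ | p.1 < p.2}.indicator (fun p => g p.1 * f p.2) := by
      ext p
      by_cases h : p.1 < p.2 <;>
        simp [Function.uncurry, hF, Set.indicator_apply, h, Set.mem_Ioi, mul_comm]
    rw [this]
    exact ((hg1.mul_prod hf1)).indicator (measurableSet_lt measurable_fst measurable_snd)
  have swap := MeasureTheory.integral_integral_swap hFint
  -- inner integral computations
  have inner1 : ∀ t ∈ Ioc a b, (∫ s, F t s ∂μ) = g t * ∫ s in Ioc t b, f s := by
    intro t ht
    rw [hμ]
    calc ∫ s in Ioc a b, (Ioi t).indicator f s * g t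
        = (∫ s in Ioc a b, (Ioi t).indicator f s) * g t := by rw [MeasureTheory.integral_mul_const]
      _ = (∫ s in Ioc a b ∩ Ioi t, f s) * g t := by
            rw [setIntegral_indicator measurableSet_Ioi]
      _ = (∫ s in Ioc t b, f s) * g t := by
            rw [Ioc_inter_Ioi, sup_eq_right.mpr ht.1.le]
      _ = g t * ∫ s in Ioc t b, f s := mul_comm _ _
  have inner2 : ∀ s ∈ Ioc a b, (∫ t, F t s ∂μ) = f s * ∫ t in Ioc a s, g t := by
    intro s hs
    have hFs : (fun t => F t s) = (Iio s).indicator (fun t => f s * g t) := by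
      ext t
      by_cases h : t < s <;>
        simp [hF, Set.indicator_apply, h, Set.mem_Ioi, Set.mem_Iio, mul_comm]
    rw [hμ, hFs, setIntegral_indicator measurableSet_Iio]
    have hset : Ioc a b ∩ Iio s = Ioo a s := by
      ext t
      simp only [Set.mem_inter_iff, Set.mem_Ioc, Set.mem_Iio, Set.mem_Ioo]
      exact ⟨fun h => ⟨h.1.1, h.2⟩, fun h => ⟨⟨h.1, h.2.le.trans hs.2⟩, h.2⟩⟩
    rw [hset, MeasureTheory.integral_const_mul, ← MeasureTheory.integral_Ioc_eq_integral_Ioo]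
  -- split lemma
  have hsplit : ∀ t ∈ Ioc a b,
      (∫ s in Ioc a b, f s) = (∫ s in a..t, f s) + ∫ s in Ioc t b, f s := by
    intro t ht
    rw [integral_of_le ht.1.le,
      ← MeasureTheory.setIntegral_union (Ioc_disjoint_Ioc_of_le le_rfl) measurableSet_Ioc
        (hf1.mono_set (Ioc_subset_Ioc_right ht.2)) (hf1.mono_set (Ioc_subset_Ioc_left ht.1.le)),
      Ioc_union_Ioc_eq_Ioc ht.1.le ht.2]
  -- integrability of t ↦ g t * ∫_{Ioc t b} f
  have hS2 : IntegrableOn (fun t => g t * (∫ s in Ioc t b, f s)) (Ioc a b) volume := by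
    have h2 : IntervalIntegrable
        (fun t => ((∫ s in Ioc a b, f s) - ∫ s in a..t, f s) * g t) volume a b :=
      hg.continuousOn_mul (continuousOn_const.sub (by rwa [uIcc_of_le hab]))
    have h2' := (intervalIntegrable_iff_integrableOn_Ioc_of_le hab).mp h2
    refine h2'.congr_fun (fun t ht => ?_) measurableSet_Ioc
    rw [hsplit t ht]
    ring
  -- the swap identity in usable form
  have e1 : (∫ t, (∫ s, F t s ∂μ) ∂μ)
      = ∫ t in Ioc a b, g t * (∫ s in Ioc t b, f s) := by
    rw [hμ]
    exact setIntegral_congr_fun measurableSet_Ioc (fun t ht => inner1 t ht)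
  have e2 : (∫ s, (∫ t, F t s ∂μ) ∂μ)
      = ∫ s in Ioc a b, f s * (∫ t in a..s, g t) := by
    rw [hμ]
    refine setIntegral_congr_fun measurableSet_Ioc (fun s hs => ?_)
    rw [inner2 s hs, integral_of_le hs.1.le]
  have hSwap : (∫ t in Ioc a b, g t * (∫ s in Ioc t b, f s))
      = ∫ s in Ioc a b, f s * (∫ t in a..s, g t) := by
    rw [← e1, ← e2]; exact swap
  -- assemble
  have hHfg1 := (intervalIntegrable_iff_integrableOn_Ioc_of_le hab).mp hHfg
  have hfHg1 := (intervalIntegrable_iff_integrableOn_Ioc_of_le hab).mp hfHg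
  rw [intervalIntegral.integral_of_le hab, intervalIntegral.integral_of_le hab,
    intervalIntegral.integral_of_le hab,
    MeasureTheory.integral_add hHfg1 hfHg1, ← hSwap,
    ← MeasureTheory.integral_add hHfg1 hS2]
  have : ∀ t ∈ Ioc a b,
      (∫ s in a..t, f s) * g t + g t * (∫ s in Ioc t b, f s)
        = g t * (∫ s in Ioc a b, f s) := by
    intro t ht
    rw [hsplit t ht]; ring
  rw [setIntegral_congr_fun measurableSet_Ioc this, MeasureTheory.integral_mul_const]
  ring

/-- Integration by parts: a C¹ function against an integrable function. -/
lemma lemA {g g' h : ℝ → ℝ} {a b : ℝ} (hab : a ≤ b)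
    (hg : ∀ t ∈ Icc a b, HasDerivAt g (g' t) t)
    (hg' : ContinuousOn g' (Icc a b))
    (hh : IntervalIntegrable h volume a b) :
    ∫ t in a..b, g t * h t
      = g b * (∫ t in a..b, h t) - ∫ t in a..b, g' t * (∫ s in a..t, h s) := by
  have huIcc : uIcc a b = Icc a b := uIcc_of_le hab
  have hg'c : ContinuousOn g' (uIcc a b) := by rwa [huIcc]
  have hgc : ContinuousOn g (Icc a b) := fun t ht => (hg t ht).continuousAt.continuousWithinAt
  have hg'int : IntervalIntegrable g' volume a b := hg'c.intervalIntegrable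
  have hftc : ∀ x ∈ Icc a b, (∫ s in a..x, g' s) = g x - g a := by
    intro x hx
    refine intervalIntegral.integral_eq_sub_of_hasDerivAt (fun t ht => hg t ?_) ?_
    · rw [uIcc_of_le hx.1] at ht
      exact ⟨ht.1, ht.2.trans hx.2⟩
    · exact hg'int.mono_set (by rw [huIcc, uIcc_of_le hx.1]; exact Icc_subset_Icc le_rfl hx.2)
  have hHh : ContinuousOn (fun t => ∫ s in a..t, h s) (uIcc a b) :=
    continuousOn_primitive_interval' hh (by simp [huIcc, hab])
  have key := lemB hab hh hg'int
  rw [hftc b ⟨hab, le_rfl⟩] at key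
  have e : EqOn (fun t => (∫ s in a..t, h s) * g' t + h t * (∫ s in a..t, g' s))
      (fun t => (∫ s in a..t, h s) * g' t + h t * (g t - g a)) (uIcc a b) := by
    intro t ht
    rw [huIcc] at ht
    simp only
    rw [hftc t ht]
  rw [intervalIntegral.integral_congr e] at key
  have i1 : IntervalIntegrable (fun t => (∫ s in a..t, h s) * g' t) volume a b :=
    (hHh.mul hg'c).intervalIntegrable
  have i2 : IntervalIntegrable (fun t => h t * (g t - g a)) volume a b :=
    hh.mul_continuousOn ((by rwa [huIcc] : ContinuousOn g (uIcc a b)).sub continuousOn_const)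
  rw [intervalIntegral.integral_add i1 i2] at key
  have A1 : ∫ t in a..b, h t * (g t - g a)
      = (∫ t in a..b, g t * h t) - g a * ∫ t in a..b, h t := by
    have : (fun t => h t * (g t - g a)) = fun t => g t * h t - g a * h t := by
      funext t; ring
    rw [this, intervalIntegral.integral_sub
      (hh.continuousOn_mul (by rwa [huIcc])) (hh.const_mul (g a)),
      intervalIntegral.integral_const_mul]
  rw [A1] at key
  have A2 : ∫ t in a..b, (∫ s in a..t, h s) * g' t
      = ∫ t in a..b, g' t * (∫ s in a..t, h s) := by
    apply intervalIntegral.integral_congr; intro t _; exact mul_comm _ _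
  rw [A2] at key
  linarith [key]

noncomputable def Dd (t : ℝ) : ℝ := 2 + 2*Real.cos t + t*Real.sin t
noncomputable def pp (t : ℝ) : ℝ := (t*Real.cos t - Real.sin t) / Dd t
noncomputable def qq (t : ℝ) : ℝ := -(1 + Real.cos t) / Dd t
noncomputable def gg (t : ℝ) : ℝ := -Real.sin t / Dd t

lemma tsin_nonneg {t : ℝ} (ht : |t| ≤ π) : 0 ≤ t * Real.sin t := by
  rcases le_total 0 t with h | h
  · have := Real.sin_nonneg_of_nonneg_of_le_pi h (by rwa [abs_of_nonneg h] at ht)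
    positivity
  · have h1 : Real.sin t ≤ 0 := by
      have := Real.sin_nonneg_of_nonneg_of_le_pi (neg_nonneg.mpr h)
        (by rwa [abs_of_nonpos h] at ht)
      simpa using this
    exact mul_nonneg_iff.mpr (Or.inr ⟨h, h1⟩)

lemma Dd_pos {t : ℝ} (ht : |t| < π) : 0 < Dd t := by
  have h1 : Real.cos π < Real.cos |t| :=
    Real.cos_lt_cos_of_nonneg_of_le_pi (abs_nonneg t) le_rfl ht
  rw [Real.cos_pi, Real.cos_abs] at h1
  have h2 := tsin_nonneg ht.le
  unfold Dd; nlinarith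

lemma hD' (t : ℝ) : HasDerivAt Dd (t*Real.cos t - Real.sin t) t := by
  unfold Dd
  have h1 := ((hasDerivAt_const t 2).add ((Real.hasDerivAt_cos t).const_mul 2)).add
      ((hasDerivAt_id t).mul (Real.hasDerivAt_sin t))
  refine h1.congr_deriv ?_
  simp only [id_eq]
  ring

lemma hpp {t : ℝ} (ht : |t| < π) :
    HasDerivAt pp (-(1 + (pp t)^2 + 2*qq t)) t := by
  have hD := Dd_pos ht
  have hN : HasDerivAt (fun t : ℝ => t*Real.cos t - Real.sin t) (-(t*Real.sin t)) t := by
    have := ((hasDerivAt_id t).mul (Real.hasDerivAt_cos t)).sub (Real.hasDerivAt_sin t)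
    refine this.congr_deriv ?_
    simp only [id_eq]; ring
  have := hN.div (hD' t) hD.ne'
  refine this.congr_deriv ?_
  unfold pp qq Dd at *
  have hD2 : 2 * (1 + Real.cos t) + t * Real.sin t ≠ 0 := by intro h; linarith
  have hD3 := hD.ne'
  field_simp
  ring

lemma hqq {t : ℝ} (ht : |t| < π) :
    HasDerivAt qq (-(gg t) - pp t * qq t) t := by
  have hD := Dd_pos ht
  have hN : HasDerivAt (fun t : ℝ => -(1 + Real.cos t)) (Real.sin t) t := by
    have := ((hasDerivAt_const t 1).add (Real.hasDerivAt_cos t)).neg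
    refine this.congr_deriv ?_; ring
  have := hN.div (hD' t) hD.ne'
  refine this.congr_deriv ?_
  unfold pp qq gg Dd at *
  field_simp

lemma hgg {t : ℝ} (ht : |t| < π) :
    HasDerivAt gg (-(qq t)^2) t := by
  have hD := Dd_pos ht
  have hN : HasDerivAt (fun t : ℝ => -Real.sin t) (-Real.cos t) t :=
    (Real.hasDerivAt_sin t).neg
  have := hN.div (hD' t) hD.ne'
  refine this.congr_deriv ?_
  unfold qq Dd at *
  have hD2 : 2 * (1 + Real.cos t) + t * Real.sin t ≠ 0 := by intro h; linarith
  have hD3 := hD.ne'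
  field_simp
  nlinarith [Real.sin_sq_add_cos_sq t, sq_nonneg (2 + 2*Real.cos t + t*Real.sin t)]

lemma Kpos {θ : ℝ} (hθ : θ ∈ Set.Ioo 0 π) : 0 < Real.sin θ - θ * Real.cos θ := by
  have hmono : StrictMonoOn (fun t => Real.sin t - t * Real.cos t) (Icc 0 π) := by
    apply strictMonoOn_of_deriv_pos (convex_Icc 0 π)
    · fun_prop
    · intro t ht
      rw [interior_Icc] at ht
      have hd : HasDerivAt (fun t => Real.sin t - t * Real.cos t) (t * Real.sin t) t := by
        have := (Real.hasDerivAt_sin t).sub ((hasDerivAt_id t).mul (Real.hasDerivAt_cos t))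
        refine this.congr_deriv ?_
        simp only [id_eq]; ring
      rw [hd.deriv]
      exact mul_pos ht.1 (Real.sin_pos_of_pos_of_lt_pi ht.1 ht.2)
  have h := hmono ⟨le_rfl, Real.pi_pos.le⟩ ⟨hθ.1.le, hθ.2.le⟩ hθ.1
  simpa using h

lemma keyIneq {θ : ℝ} (hθ : θ ∈ Set.Ioo 0 π) {w' : ℝ → ℝ}
    (hw'i : IntervalIntegrable w' volume (-θ) θ)
    (hw'sq : IntervalIntegrable (fun t => (w' t)^2) volume (-θ) θ)
    (hwb : (∫ t in (-θ)..θ, w' t) = 0)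
    (hWb : (∫ t in (-θ)..θ, (∫ s in (-θ)..t, w' s)) = 0) :
    0 ≤ ∫ t in (-θ)..θ, ((w' t)^2 - (∫ s in (-θ)..t, w' s)^2) := by
  obtain ⟨hθ0, hθπ⟩ := hθ
  set a : ℝ := -θ with ha
  set b : ℝ := θ with hb
  have hab : a ≤ b := by rw [ha, hb]; linarith
  have hu : uIcc a b = Icc a b := uIcc_of_le hab
  have hIcc : ∀ t ∈ Icc a b, |t| < π := by
    intro t ht
    rw [abs_lt]
    constructor <;> [linarith [ht.1]; linarith [ht.2]]
  set w : ℝ → ℝ := fun x => ∫ s in a..x, w' s with hwdef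
  set W : ℝ → ℝ := fun x => ∫ s in a..x, w s with hWdef
  -- continuity of primitives
  have hwc : ContinuousOn w (Icc a b) := by
    rw [← hu]; exact continuousOn_primitive_interval' hw'i (by simp [hu, hab])
  have hwint : IntervalIntegrable w volume a b := by
    apply ContinuousOn.intervalIntegrable; rwa [hu]
  have hWc : ContinuousOn W (Icc a b) := by
    rw [← hu]; exact continuousOn_primitive_interval' hwint (by simp [hu, hab])
  have hwb' : w b = 0 := hwb
  have hWb' : W b = 0 := hWb
  -- coefficient continuity
  have hppc : ContinuousOn pp (Icc a b) :=
    fun t ht => ((hpp (hIcc t ht)).continuousAt).continuousWithinAt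
  have hqqc : ContinuousOn qq (Icc a b) :=
    fun t ht => ((hqq (hIcc t ht)).continuousAt).continuousWithinAt
  have hggc : ContinuousOn gg (Icc a b) :=
    fun t ht => ((hgg (hIcc t ht)).continuousAt).continuousWithinAt
  -- subinterval integrability
  have hmono : ∀ x ∈ Icc a b, IntervalIntegrable w' volume a x := by
    intro x hx
    exact hw'i.mono_set (by rw [hu, uIcc_of_le hx.1]; exact Icc_subset_Icc le_rfl hx.2)
  have hmonow : ∀ x ∈ Icc a b, IntervalIntegrable w volume a x := by
    intro x hx
    exact hwint.mono_set (by rw [hu, uIcc_of_le hx.1]; exact Icc_subset_Icc le_rfl hx.2)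
  -- primitive identities
  have hsq : ∀ x ∈ Icc a b, (∫ s in a..x, 2 * w s * w' s) = (w x)^2 := by
    intro x hx
    have h := lemB hx.1 (hmono x hx) (hmono x hx)
    have e : ∫ t in a..x, ((∫ s in a..t, w' s) * w' t + w' t * (∫ s in a..t, w' s))
        = ∫ s in a..x, 2 * w s * w' s := by
      apply intervalIntegral.integral_congr; intro t _; simp only [hwdef]; ring
    rw [e] at h
    rw [← h, hwdef]; ring
  have hWw : ∀ x ∈ Icc a b, (∫ s in a..x, (W s * w' s + w s * w s)) = W x * w x := by
    intro x hx
    have h := lemB hx.1 (hmonow x hx) (hmono x hx)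
    have e : ∫ t in a..x, ((∫ s in a..t, w s) * w' t + w t * (∫ s in a..t, w' s))
        = ∫ s in a..x, (W s * w' s + w s * w s) := by
      apply intervalIntegral.integral_congr; intro t _; simp only [hwdef, hWdef]
    rw [e] at h
    rw [← h]
  have hW2 : ∀ x ∈ Icc a b, (∫ s in a..x, 2 * W s * w s) = (W x)^2 := by
    intro x hx
    have h := lemB hx.1 (hmonow x hx) (hmonow x hx)
    have e : ∫ t in a..x, ((∫ s in a..t, w s) * w t + w t * (∫ s in a..t, w s))
        = ∫ s in a..x, 2 * W s * w s := by
      apply intervalIntegral.integral_congr; intro t _; simp only [hWdef]; ring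
    rw [e] at h
    rw [← h, hWdef]; ring
  -- integrability battery
  have ih1 : IntervalIntegrable (fun t => 2 * w t * w' t) volume a b := by
    have e : (fun t => 2 * w t * w' t) = fun t => (2 * w t) * w' t := by funext t; ring
    rw [e]
    exact hw'i.continuousOn_mul (by rw [hu]; exact continuousOn_const.mul hwc)
  have ih2 : IntervalIntegrable (fun t => W t * w' t + w t * w t) volume a b := by
    refine IntervalIntegrable.add ?_ ?_
    · exact hw'i.continuousOn_mul (by rw [hu]; exact hWc)
    · exact (by rw [← hu] at hwc; exact (hwc.mul hwc).intervalIntegrable)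
  have ih3 : IntervalIntegrable (fun t => 2 * W t * w t) volume a b := by
    apply ContinuousOn.intervalIntegrable
    rw [hu]; exact (continuousOn_const.mul hWc).mul hwc
  have if1 : IntervalIntegrable (fun t => pp t * (2 * w t * w' t)) volume a b := by
    have e : (fun t => pp t * (2 * w t * w' t)) = fun t => (pp t * (2 * w t)) * w' t := by
      funext t; ring
    rw [e]
    exact hw'i.continuousOn_mul (by rw [hu]; exact hppc.mul (continuousOn_const.mul hwc))
  have if2 : IntervalIntegrable (fun t => (2*qq t) * (W t * w' t + w t * w t)) volume a b := by
    have e : (fun t => (2*qq t) * (W t * w' t + w t * w t))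
        = fun t => ((2*qq t) * W t) * w' t + (2*qq t) * (w t * w t) := by funext t; ring
    rw [e]
    refine IntervalIntegrable.add ?_ ?_
    · exact hw'i.continuousOn_mul (by rw [hu]; exact (continuousOn_const.mul hqqc).mul hWc)
    · apply ContinuousOn.intervalIntegrable
      rw [hu]; exact (continuousOn_const.mul hqqc).mul (hwc.mul hwc)
  have if3 : IntervalIntegrable (fun t => gg t * (2 * W t * w t)) volume a b := by
    apply ContinuousOn.intervalIntegrable
    rw [hu]; exact hggc.mul ((continuousOn_const.mul hWc).mul hwc)
  have ifR : IntervalIntegrable (fun t =>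
      -(1 + 2*qq t + (pp t)^2)*(w t)^2 - 2*(pp t*qq t)*(w t*W t)
        - 2*gg t*(W t*w t) - (qq t)^2*(W t)^2) volume a b := by
    apply ContinuousOn.intervalIntegrable
    rw [hu]
    refine ContinuousOn.sub (ContinuousOn.sub (ContinuousOn.sub ?_ ?_) ?_) ?_
    · exact ((continuousOn_const.add (continuousOn_const.mul hqqc)).add (hppc.pow 2)).neg.mul
        (hwc.pow 2)
    · exact (continuousOn_const.mul (hppc.mul hqqc)).mul (hwc.mul hWc)
    · exact (continuousOn_const.mul hggc).mul (hWc.mul hwc)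
    · exact (hqqc.pow 2).mul (hWc.pow 2)
  have ifD : IntervalIntegrable (fun t => (w' t - pp t * w t - qq t * W t)^2) volume a b := by
    have e : (fun t => (w' t - pp t * w t - qq t * W t)^2)
        = fun t => ((w' t)^2 - (2*(pp t*w t + qq t*W t)) * w' t)
            + (pp t*w t + qq t*W t)^2 := by funext t; ring
    rw [e]
    refine IntervalIntegrable.add (IntervalIntegrable.sub hw'sq ?_) ?_
    · exact hw'i.continuousOn_mul
        (by rw [hu]; exact continuousOn_const.mul ((hppc.mul hwc).add (hqqc.mul hWc)))
    · apply ContinuousOn.intervalIntegrable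
      rw [hu]; exact ((hppc.mul hwc).add (hqqc.mul hWc)).pow 2
  -- derivative continuity for lemA
  have hg1' : ContinuousOn (fun t => -(1 + (pp t)^2 + 2*qq t)) (Icc a b) :=
    ((continuousOn_const.add (hppc.pow 2)).add (continuousOn_const.mul hqqc)).neg
  have hg2' : ContinuousOn (fun t => 2*(-(gg t) - pp t * qq t)) (Icc a b) :=
    continuousOn_const.mul (hggc.neg.sub (hppc.mul hqqc))
  have hg3' : ContinuousOn (fun t => -(qq t)^2) (Icc a b) := (hqqc.pow 2).neg
  -- the three integration-by-parts identities
  have hA1 : (∫ t in a..b, pp t * (2 * w t * w' t))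
      = ∫ t in a..b, (1 + (pp t)^2 + 2*qq t) * (w t)^2 := by
    have h := lemA hab (fun t ht => hpp (hIcc t ht)) hg1' ih1
    rw [hsq b ⟨hab, le_rfl⟩, hwb'] at h
    have e : ∫ t in a..b, (-(1 + (pp t)^2 + 2*qq t)) * (∫ s in a..t, 2 * w s * w' s)
        = ∫ t in a..b, -((1 + (pp t)^2 + 2*qq t) * (w t)^2) := by
      apply intervalIntegral.integral_congr
      intro t ht
      rw [hu] at ht
      simp only [hsq t ht]; ring
    rw [e, intervalIntegral.integral_neg] at h
    rw [h]; ring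
  have hA2 : (∫ t in a..b, (2*qq t) * (W t * w' t + w t * w t))
      = ∫ t in a..b, -(2*(-(gg t) - pp t * qq t)) * (W t * w t) := by
    have h := lemA hab (g := fun t => 2*qq t)
      (fun t ht => (hqq (hIcc t ht)).const_mul 2) hg2' ih2
    rw [hWw b ⟨hab, le_rfl⟩, hWb'] at h
    have e : ∫ t in a..b, (2*(-(gg t) - pp t * qq t)) * (∫ s in a..t, (W s * w' s + w s * w s))
        = ∫ t in a..b, (2*(-(gg t) - pp t * qq t)) * (W t * w t) := by
      apply intervalIntegral.integral_congr
      intro t ht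
      rw [hu] at ht
      simp only [hWw t ht]
    rw [e] at h
    rw [h]
    simp only [zero_mul, mul_zero, zero_sub]
    rw [← intervalIntegral.integral_neg]
    apply intervalIntegral.integral_congr
    intro t _
    ring
  have hA3 : (∫ t in a..b, gg t * (2 * W t * w t))
      = ∫ t in a..b, (qq t)^2 * (W t)^2 := by
    have h := lemA hab (fun t ht => hgg (hIcc t ht)) hg3' ih3
    rw [hW2 b ⟨hab, le_rfl⟩, hWb'] at h
    have e : ∫ t in a..b, (-(qq t)^2) * (∫ s in a..t, 2 * W s * w s)
        = ∫ t in a..b, -((qq t)^2 * (W t)^2) := by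
      apply intervalIntegral.integral_congr
      intro t ht
      rw [hu] at ht
      simp only [hW2 t ht]; ring
    rw [e, intervalIntegral.integral_neg] at h
    rw [h]; ring
  -- main decomposition
  show 0 ≤ ∫ t in a..b, ((w' t)^2 - (w t)^2)
  have step1 : (∫ t in a..b, ((w' t)^2 - (w t)^2))
      = (∫ t in a..b, (w' t - pp t * w t - qq t * W t)^2)
        + ((∫ t in a..b, pp t * (2 * w t * w' t))
        + ((∫ t in a..b, (2*qq t) * (W t * w' t + w t * w t))
        + ((∫ t in a..b, gg t * (2 * W t * w t))
        + (∫ t in a..b, (-(1 + 2*qq t + (pp t)^2)*(w t)^2 - 2*(pp t*qq t)*(w t*W t)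
              - 2*gg t*(W t*w t) - (qq t)^2*(W t)^2))))) := by
    rw [← intervalIntegral.integral_add if3 ifR, ← intervalIntegral.integral_add if2 (if3.add ifR),
      ← intervalIntegral.integral_add if1 (if2.add (if3.add ifR)),
      ← intervalIntegral.integral_add ifD (if1.add (if2.add (if3.add ifR)))]
    apply intervalIntegral.integral_congr
    intro t _
    simp only
    ring
  have step2 : (∫ t in a..b, pp t * (2 * w t * w' t))
        + ((∫ t in a..b, (2*qq t) * (W t * w' t + w t * w t))
        + ((∫ t in a..b, gg t * (2 * W t * w t))
        + (∫ t in a..b, (-(1 + 2*qq t + (pp t)^2)*(w t)^2 - 2*(pp t*qq t)*(w t*W t)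
              - 2*gg t*(W t*w t) - (qq t)^2*(W t)^2)))) = 0 := by
    rw [hA1, hA2, hA3]
    have c1 : ContinuousOn (fun t => (1 + (pp t)^2 + 2*qq t) * (w t)^2) (uIcc a b) := by
      rw [hu]
      exact ((continuousOn_const.add (hppc.pow 2)).add (continuousOn_const.mul hqqc)).mul
        (hwc.pow 2)
    have c2 : ContinuousOn (fun t => -(2*(-(gg t) - pp t * qq t)) * (W t * w t)) (uIcc a b) := by
      rw [hu]
      exact (continuousOn_const.mul (hggc.neg.sub (hppc.mul hqqc))).neg.mul (hWc.mul hwc)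
    have c3 : ContinuousOn (fun t => (qq t)^2 * (W t)^2) (uIcc a b) := by
      rw [hu]; exact (hqqc.pow 2).mul (hWc.pow 2)
    rw [← intervalIntegral.integral_add c3.intervalIntegrable ifR,
      ← intervalIntegral.integral_add c2.intervalIntegrable
        (c3.intervalIntegrable.add ifR),
      ← intervalIntegral.integral_add c1.intervalIntegrable
        (c2.intervalIntegrable.add (c3.intervalIntegrable.add ifR))]
    rw [show (0:ℝ) = ∫ t in a..b, (0:ℝ) by simp]
    apply intervalIntegral.integral_congr
    intro t _
    simp only
    ring
  rw [step1, step2, add_zero]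
  exact intervalIntegral.integral_nonneg hab (fun t _ => sq_nonneg _)

/-- `u ∈ W^{1,2}_0(-θ,θ)` with weak derivative `u'`: `u'` and `(u')^2` are
integrable on `(-θ,θ)`, `u` is the primitive of `u'` starting from `-θ`
(hence absolutely continuous with `u(-θ)=0`), and `u(θ)=0`. -/
def MemW120 (θ : ℝ) (u u' : ℝ → ℝ) : Prop :=
  IntervalIntegrable u' volume (-θ) θ ∧
  IntervalIntegrable (fun t => (u' t)^2) volume (-θ) θ ∧
  (∀ x ∈ Set.Icc (-θ) θ, u x = ∫ t in (-θ)..x, u' t) ∧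
  u θ = 0

/-- For every θ ∈ (0, π) and every real s, the infimum of
∫ ((u')² - u²) over u ∈ W₀^{1,2}(-θ,θ) with ∫ u = s equals
s² cos θ / (2(sin θ - θ cos θ)). -/
theorem stmt0 (θ s : ℝ) (hθ : θ ∈ Set.Ioo 0 π) :
    IsGLB {v : ℝ | ∃ u u' : ℝ → ℝ, MemW120 θ u u' ∧
        (∫ t in (-θ)..θ, u t) = s ∧
        v = ∫ t in (-θ)..θ, ((u' t)^2 - (u t)^2)}
      (s^2 * Real.cos θ / (2 * (Real.sin θ - θ * Real.cos θ))) := by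
  obtain ⟨hθ0, hθπ⟩ := hθ
  have hK := Kpos ⟨hθ0, hθπ⟩
  have hab : (-θ:ℝ) ≤ θ := by linarith
  have hu : uIcc (-θ) θ = Icc (-θ) θ := uIcc_of_le hab
  set k := Real.cos θ with hkdef
  set K := Real.sin θ - θ * k with hKdef
  set c := s / (2*K) with hcdef
  -- the conjectured minimum value
  have hmval : s^2 * k / (2*K) = 2*c^2*K*k := by
    rw [hcdef]; field_simp
  -- primitive identity for the minimizer
  have hcsin : ∀ x y : ℝ, (∫ t in x..y, c * Real.sin t) = c * (Real.cos x - Real.cos y) := by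
    intro x y
    rw [intervalIntegral.integral_const_mul, integral_sin]
  have hprim0 : ∀ x : ℝ, (∫ t in (-θ)..x, -(c * Real.sin t)) = c * (Real.cos x - k) := by
    intro x
    have e : (fun t => -(c * Real.sin t)) = fun t => (-c) * Real.sin t := by funext t; ring
    rw [e, intervalIntegral.integral_const_mul, integral_sin, Real.cos_neg, ← hkdef]
    ring
  -- total integral of the minimizer
  have htot : (∫ t in (-θ)..θ, c * (Real.cos t - k)) = s := by
    have h1 : (∫ t in (-θ)..θ, c * (Real.cos t - k))
        = c * ((∫ t in (-θ)..θ, Real.cos t) - ∫ t in (-θ)..θ, (k:ℝ)) := by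
      rw [← intervalIntegral.integral_sub (Continuous.intervalIntegrable (by fun_prop) _ _)
        (intervalIntegrable_const), intervalIntegral.integral_const_mul]
    rw [h1, integral_cos, intervalIntegral.integral_const, Real.sin_neg, smul_eq_mul]
    rw [show Real.sin θ - -Real.sin θ - (θ - -θ) * k = 2*K by rw [hKdef]; ring, hcdef]
    field_simp
  -- energy of the minimizer
  have henergy : (∫ t in (-θ)..θ, ((-(c * Real.sin t))^2 - (c * (Real.cos t - k))^2))
      = 2 * c^2 * K * k := by
    have e : (fun t => ((-(c * Real.sin t))^2 - (c * (Real.cos t - k))^2))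
        = fun t => ((c^2) * Real.sin t^2 - (c^2) * Real.cos t^2)
            + ((2*c^2*k) * Real.cos t - (c^2*k^2)) := by
      funext t; ring
    rw [e, intervalIntegral.integral_add, intervalIntegral.integral_sub,
      intervalIntegral.integral_sub, intervalIntegral.integral_const_mul,
      intervalIntegral.integral_const_mul, intervalIntegral.integral_const_mul,
      intervalIntegral.integral_const, integral_sin_sq, integral_cos_sq, integral_cos]
    · simp only [Real.sin_neg, Real.cos_neg, smul_eq_mul, hKdef, ← hkdef]
      ring
    all_goals
      first
      | exact Continuous.intervalIntegrable (by fun_prop) _ _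
      | exact (Continuous.intervalIntegrable (by fun_prop) _ _).sub
          (Continuous.intervalIntegrable (by fun_prop) _ _)
  constructor
  · -- lower bound
    rintro v ⟨u, u', ⟨hu'i, hu'sq, hprim, huθ⟩, hint, hveq⟩
    subst hveq
    set w' : ℝ → ℝ := fun t => u' t + c * Real.sin t with hw'def
    have hw'i : IntervalIntegrable w' volume (-θ) θ :=
      hu'i.add (Continuous.intervalIntegrable (by fun_prop) _ _)
    have hw'sq : IntervalIntegrable (fun t => (w' t)^2) volume (-θ) θ := by
      have e : (fun t => (w' t)^2)
          = fun t => (u' t)^2 + ((2*c) * (Real.sin t * u' t) + c^2 * Real.sin t^2) := by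
        funext t; simp only [hw'def]; ring
      rw [e]
      exact hu'sq.add (((hu'i.continuousOn_mul
        (Real.continuous_sin.continuousOn)).const_mul (2*c)).add
        (Continuous.intervalIntegrable (by fun_prop) _ _))
    have hIu' : (∫ t in (-θ)..θ, u' t) = 0 := by
      have h := hprim θ ⟨hab, le_rfl⟩
      rw [huθ] at h; exact h.symm
    have hwb : (∫ t in (-θ)..θ, w' t) = 0 := by
      rw [hw'def, intervalIntegral.integral_add hu'i
        (Continuous.intervalIntegrable (by fun_prop) _ _), hIu', hcsin, Real.cos_neg]
      ring
    have hwprim : ∀ x ∈ Icc (-θ) θ, (∫ s in (-θ)..x, w' s) = u x + c * (Real.cos θ - Real.cos x) := by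
      intro x hx
      rw [hw'def, intervalIntegral.integral_add
        (hu'i.mono_set (by rw [hu, uIcc_of_le hx.1]; exact Icc_subset_Icc le_rfl hx.2))
        (Continuous.intervalIntegrable (by fun_prop) _ _),
        ← hprim x hx, hcsin, Real.cos_neg]
    have hPcont : ContinuousOn (fun x => ∫ s in (-θ)..x, u' s) (Icc (-θ) θ) := by
      rw [← hu]; exact continuousOn_primitive_interval' hu'i (by simp [hu, hab])
    have huint : IntervalIntegrable u volume (-θ) θ := by
      rw [intervalIntegrable_iff_integrableOn_Ioc_of_le hab]
      have hP : IntervalIntegrable (fun x => ∫ s in (-θ)..x, u' s) volume (-θ) θ := by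
        apply ContinuousOn.intervalIntegrable; rwa [hu]
      exact ((intervalIntegrable_iff_integrableOn_Ioc_of_le hab).mp hP).congr_fun
        (fun t ht => (hprim t (Ioc_subset_Icc_self ht)).symm) measurableSet_Ioc
    have hWb : (∫ t in (-θ)..θ, (∫ s in (-θ)..t, w' s)) = 0 := by
      have e : EqOn (fun t => ∫ s in (-θ)..t, w' s)
          (fun t => u t + c * (Real.cos θ - Real.cos t)) (uIcc (-θ) θ) := by
        rw [hu]; intro t ht; exact hwprim t ht
      rw [intervalIntegral.integral_congr e, intervalIntegral.integral_add huint
        (Continuous.intervalIntegrable (by fun_prop) _ _), hint]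
      have h2 : (∫ t in (-θ)..θ, c * (Real.cos θ - Real.cos t))
          = ∫ t in (-θ)..θ, -(c * (Real.cos t - k)) := by
        apply intervalIntegral.integral_congr
        intro t _
        rw [← hkdef]; ring
      rw [h2, intervalIntegral.integral_neg, htot]
      ring
    -- positivity of the quadratic part
    have hkey := keyIneq ⟨hθ0, hθπ⟩ hw'i hw'sq hwb hWb
    -- continuity of the primitive of w'
    have hwcont : ContinuousOn (fun x => ∫ s in (-θ)..x, w' s) (Icc (-θ) θ) := by
      rw [← hu]; exact continuousOn_primitive_interval' hw'i (by simp [hu, hab])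
    -- integrability of the three parts
    have iQ : IntervalIntegrable
        (fun t => (w' t)^2 - (∫ s in (-θ)..t, w' s)^2) volume (-θ) θ := by
      refine hw'sq.sub ?_
      apply ContinuousOn.intervalIntegrable
      rw [hu]; exact hwcont.pow 2
    have iE : IntervalIntegrable
        (fun t => ((-(c * Real.sin t))^2 - (c * (Real.cos t - k))^2)) volume (-θ) θ :=
      Continuous.intervalIntegrable (by fun_prop) _ _
    have iB : IntervalIntegrable
        (fun t => (-(c * Real.sin t)) * w' t
          - (c * (Real.cos t - k)) * (∫ s in (-θ)..t, w' s)) volume (-θ) θ := by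
      refine IntervalIntegrable.sub ?_ ?_
      · exact hw'i.continuousOn_mul (by rw [hu]; exact (Continuous.continuousOn (by fun_prop)))
      · apply ContinuousOn.intervalIntegrable
        rw [hu]
        exact (Continuous.continuousOn (by fun_prop)).mul hwcont
    have iB2 : IntervalIntegrable
        (fun t => 2 * ((-(c * Real.sin t)) * w' t
          - (c * (Real.cos t - k)) * (∫ s in (-θ)..t, w' s))) volume (-θ) θ := iB.const_mul 2
    -- main decomposition
    have step0 : (∫ t in (-θ)..θ, ((u' t)^2 - (u t)^2))
        = (∫ t in (-θ)..θ, ((w' t)^2 - (∫ s in (-θ)..t, w' s)^2))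
          + ((∫ t in (-θ)..θ, ((-(c * Real.sin t))^2 - (c * (Real.cos t - k))^2))
          + 2 * (∫ t in (-θ)..θ, ((-(c * Real.sin t)) * w' t
              - (c * (Real.cos t - k)) * (∫ s in (-θ)..t, w' s)))) := by
      rw [← intervalIntegral.integral_const_mul,
        ← intervalIntegral.integral_add iE iB2,
        ← intervalIntegral.integral_add iQ (iE.add iB2)]
      apply intervalIntegral.integral_congr
      intro t ht
      rw [hu] at ht
      have h1 := hwprim t ht
      have h2 : u t = (∫ s in (-θ)..t, w' s) - c * (Real.cos θ - Real.cos t) := by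
        rw [h1]; ring
      have h3 : u' t = w' t - c * Real.sin t := by simp only [hw'def]; ring
      simp only
      rw [h2, h3, ← hkdef]
      ring
    -- the cross term vanishes
    have hBzero : (∫ t in (-θ)..θ, ((-(c * Real.sin t)) * w' t
        - (c * (Real.cos t - k)) * (∫ s in (-θ)..t, w' s))) = 0 := by
      have i1 : IntervalIntegrable (fun t => (-(c * Real.sin t)) * w' t) volume (-θ) θ :=
        hw'i.continuousOn_mul (by rw [hu]; exact (Continuous.continuousOn (by fun_prop)))
      have i2 : IntervalIntegrable
          (fun t => (c * (Real.cos t - k)) * (∫ s in (-θ)..t, w' s)) volume (-θ) θ := by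
        apply ContinuousOn.intervalIntegrable
        rw [hu]
        exact (Continuous.continuousOn (by fun_prop)).mul hwcont
      rw [intervalIntegral.integral_sub i1 i2]
      have hA := lemA hab (g := Real.sin) (g' := Real.cos)
        (fun t _ => Real.hasDerivAt_sin t) Real.continuous_cos.continuousOn hw'i
      rw [hwb, mul_zero, zero_sub] at hA
      have e1 : (fun t => (-(c * Real.sin t)) * w' t)
          = fun t => (-c) * (Real.sin t * w' t) := by funext t; ring
      have e2 : (fun t => (c * (Real.cos t - k)) * (∫ s in (-θ)..t, w' s))
          = fun t => c * (Real.cos t * (∫ s in (-θ)..t, w' s))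
              - (c*k) * (∫ s in (-θ)..t, w' s) := by funext t; ring
      have icw : IntervalIntegrable
          (fun t => Real.cos t * (∫ s in (-θ)..t, w' s)) volume (-θ) θ := by
        apply ContinuousOn.intervalIntegrable
        rw [hu]
        exact Real.continuous_cos.continuousOn.mul hwcont
      have iw : IntervalIntegrable (fun t => (∫ s in (-θ)..t, w' s)) volume (-θ) θ := by
        apply ContinuousOn.intervalIntegrable
        rw [hu]; exact hwcont
      rw [e1, e2, intervalIntegral.integral_const_mul, hA,
        intervalIntegral.integral_sub (icw.const_mul c) (iw.const_mul (c*k)),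
        intervalIntegral.integral_const_mul, intervalIntegral.integral_const_mul, hWb]
      ring
    rw [step0, hBzero, henergy]
    rw [show s^2 * k / (2 * K) = 2*c^2*K*k from hmval]
    linarith [hkey]
  · -- it is the greatest lower bound since the value is attained
    intro b hb
    refine hb ⟨fun t => c * (Real.cos t - k), fun t => -(c * Real.sin t),
      ⟨Continuous.intervalIntegrable (by fun_prop) _ _,
        Continuous.intervalIntegrable (by fun_prop) _ _,
        fun x _ => (hprim0 x).symm, by show c * (Real.cos θ - k) = 0; rw [hkdef]; ring⟩, htot, ?_⟩
    rw [henergy]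
    exact hmval
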